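/- Moment–cumulant recursion. Let X be a real random variable whose moment generating function t ↦ E[e^{tX}] is finite on an open neighborhood of 0, and for j ≥ 1 define the cumulant κ_j(X) as the j-th iterated derivative at t = 0 of the cumulant generating function K(t) = log E[e^{tX}]. Then, for every m ∈ ℕ, E[X^{m+1}] = Σ_{s=0}^m binomial(m, s) · κ_{s+1}(X) · E[X^{m−s}]. -/

import Mathlib

open MeasureTheory ProbabilityTheory Finset Set
local notation "∞" => ((⊤ : ℕ∞) : WithTop ℕ∞)

section LeibnizAux

variable {s : Set ℝ}

private lemma choose_sum_aux (n : ℕ) (A B : ℕ → ℝ) :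
    ∑ k ∈ range (n + 2), ((n + 1).choose k : ℝ) * A k * B (n + 1 - k)
      = (∑ k ∈ range (n + 1), (n.choose k : ℝ) * A (k + 1) * B (n - k))
        + ∑ k ∈ range (n + 1), (n.choose k : ℝ) * A k * B (n - k + 1) := by
  rw [Finset.sum_range_succ' (fun k => ((n + 1).choose k : ℝ) * A k * B (n + 1 - k))]
  have h1 : ∀ k ∈ range (n + 1),
      ((n + 1).choose (k + 1) : ℝ) * A (k + 1) * B (n + 1 - (k + 1))
        = (n.choose k : ℝ) * A (k + 1) * B (n - k)
          + (n.choose (k + 1) : ℝ) * A (k + 1) * B (n - k) := by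
    intro k hk
    have h : (n + 1).choose (k + 1) = n.choose k + n.choose (k + 1) := Nat.choose_succ_succ' n k
    rw [h]
    have h2 : n + 1 - (k + 1) = n - k := by omega
    rw [h2]
    push_cast
    ring
  rw [Finset.sum_congr rfl h1, Finset.sum_add_distrib]
  have h3 : ∑ k ∈ range (n + 1), (n.choose (k + 1) : ℝ) * A (k + 1) * B (n - k)
      = ∑ k ∈ range (n + 1), (n.choose k : ℝ) * A k * B (n - k + 1)
        - ((n.choose 0 : ℝ) * A 0 * B (n - 0 + 1)) := by
    rw [Finset.sum_range_succ' (fun k => (n.choose k : ℝ) * A k * B (n - k + 1))]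
    rw [Finset.sum_range_succ (fun k => (n.choose (k + 1) : ℝ) * A (k + 1) * B (n - k))]
    have h4 : ∀ k ∈ range n, (n.choose (k + 1) : ℝ) * A (k + 1) * B (n - (k + 1) + 1)
        = (n.choose (k + 1) : ℝ) * A (k + 1) * B (n - k) := by
      intro k hk
      have : n - (k + 1) + 1 = n - k := by
        have := Finset.mem_range.1 hk; omega
      rw [this]
    rw [Finset.sum_congr rfl h4]
    simp [Nat.choose_succ_self]
  rw [h3]
  have h5 : ((n + 1).choose 0 : ℝ) * A 0 * B (n + 1 - 0)
      = (n.choose 0 : ℝ) * A 0 * B (n - 0 + 1) := by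
    simp [Nat.sub_zero]
  rw [h5]; ring

private lemma iteratedDerivWithin_of_isOpen' {f : ℝ → ℝ} {x : ℝ} (n : ℕ) (hs : IsOpen s)
    (hx : x ∈ s) : iteratedDerivWithin n f s x = iteratedDeriv n f x := by
  rw [iteratedDerivWithin_eq_iteratedFDerivWithin, iteratedDeriv_eq_iteratedFDeriv,
    iteratedFDerivWithin_of_isOpen n hs hx]

private lemma iteratedDeriv_mul_of_isOpen (hs : IsOpen s) :
    ∀ (n : ℕ) {f g : ℝ → ℝ}, ContDiffOn ℝ ∞ f s → ContDiffOn ℝ ∞ g s → ∀ {x : ℝ}, x ∈ s →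
      iteratedDeriv n (fun t => f t * g t) x
        = ∑ k ∈ range (n + 1),
            (n.choose k : ℝ) * iteratedDeriv k f x * iteratedDeriv (n - k) g x := by
  intro n
  induction n with
  | zero => intro f g hf hg x hx; simp
  | succ n ih =>
    intro f g hf hg x hx
    have hf' : ContDiffOn ℝ ∞ (deriv f) s := ((contDiffOn_infty_iff_deriv_of_isOpen hs).1 hf).2
    have hg' : ContDiffOn ℝ ∞ (deriv g) s := ((contDiffOn_infty_iff_deriv_of_isOpen hs).1 hg).2
    have hdf : ∀ y ∈ s, DifferentiableAt ℝ f y := fun y hy =>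
      (hf.contDiffAt (hs.mem_nhds hy)).differentiableAt (by norm_num)
    have hdg : ∀ y ∈ s, DifferentiableAt ℝ g y := fun y hy =>
      (hg.contDiffAt (hs.mem_nhds hy)).differentiableAt (by norm_num)
    have step1 : iteratedDeriv (n + 1) (fun t => f t * g t) x
        = iteratedDeriv n (fun t => deriv f t * g t + f t * deriv g t) x := by
      rw [iteratedDeriv_succ']
      refine Set.EqOn.iteratedDeriv_of_isOpen ?_ hs n hx
      intro y hy
      exact deriv_mul (hdf y hy) (hdg y hy)
    have hA : ContDiffOn ℝ ∞ (fun t => deriv f t * g t) s := hf'.mul hg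
    have hB : ContDiffOn ℝ ∞ (fun t => f t * deriv g t) s := hf.mul hg'
    have step2 : iteratedDeriv n (fun t => deriv f t * g t + f t * deriv g t) x
        = iteratedDeriv n (fun t => deriv f t * g t) x
          + iteratedDeriv n (fun t => f t * deriv g t) x := by
      rw [← iteratedDerivWithin_of_isOpen' n hs hx,
        ← iteratedDerivWithin_of_isOpen' n hs hx, ← iteratedDerivWithin_of_isOpen' n hs hx]
      exact iteratedDerivWithin_add hx hs.uniqueDiffOn
        ((hA.contDiffWithinAt hx).of_le (by exact_mod_cast le_top))
        ((hB.contDiffWithinAt hx).of_le (by exact_mod_cast le_top))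
    rw [step1, step2, ih hf' hg hx, ih hf hg' hx]
    have e1 : ∀ k, iteratedDeriv k (deriv f) x = iteratedDeriv (k + 1) f x := by
      intro k; rw [iteratedDeriv_succ']
    have e2 : ∀ k, iteratedDeriv k (deriv g) x = iteratedDeriv (k + 1) g x := by
      intro k; rw [iteratedDeriv_succ']
    rw [choose_sum_aux n (fun k => iteratedDeriv k f x) (fun k => iteratedDeriv k g x)]
    congr 1
    · exact Finset.sum_congr rfl fun k _ => by rw [← e1 k]
    · exact Finset.sum_congr rfl fun k _ => by rw [← e2 (n - k)]

private lemma iteratedDeriv_chain (hs : IsOpen s) (F : ℕ → ℝ → ℝ)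
    (hF : ∀ n, ∀ x ∈ s, HasDerivAt (F n) (F (n + 1) x) x) :
    ∀ n k, ∀ x ∈ s, iteratedDeriv n (F k) x = F (k + n) x := by
  intro n
  induction n with
  | zero => intro k x _; simp
  | succ n ih =>
    intro k x hx
    rw [iteratedDeriv_succ']
    have heq : Set.EqOn (deriv (F k)) (F (k + 1)) s := fun y hy => (hF k y hy).deriv
    rw [heq.iteratedDeriv_of_isOpen hs n hx, ih (k + 1) x hx]
    congr 1; omega

private lemma contDiffOn_chain (hs : IsOpen s) (F : ℕ → ℝ → ℝ)
    (hF : ∀ n, ∀ x ∈ s, HasDerivAt (F n) (F (n + 1) x) x) (k : ℕ) :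
    ContDiffOn ℝ ∞ (F k) s := by
  have H : ∀ (m : ℕ) (k : ℕ), ContDiffOn ℝ m (F k) s := by
    intro m
    induction m with
    | zero =>
      intro k
      rw [show ((0 : ℕ) : WithTop ℕ∞) = 0 from rfl, contDiffOn_zero]
      exact fun x hx => ((hF k x hx).continuousAt).continuousWithinAt
    | succ m ih =>
      intro k
      have hc : ((m + 1 : ℕ) : WithTop ℕ∞) = (m : WithTop ℕ∞) + 1 := by push_cast; rfl
      rw [hc, contDiffOn_succ_iff_deriv_of_isOpen hs]
      refine ⟨fun x hx => (hF k x hx).differentiableAt.differentiableWithinAt, ?_, ?_⟩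
      · intro h; exact absurd h (by simp)
      · exact (ih (k + 1)).congr fun y hy => (hF k y hy).deriv
  rw [contDiffOn_infty]
  exact fun m => H m k

end LeibnizAux

section IntegAux

private lemma exp_mul_le_add {a b t x : ℝ} (hat : a ≤ t) (htb : t ≤ b) :
    Real.exp (t * x) ≤ Real.exp (a * x) + Real.exp (b * x) := by
  rcases le_or_gt 0 x with hx | hx
  · have : t * x ≤ b * x := mul_le_mul_of_nonneg_right htb hx
    exact (Real.exp_le_exp.2 this).trans (le_add_of_nonneg_left (Real.exp_pos _).le)
  · have : t * x ≤ a * x := mul_le_mul_of_nonpos_right hat hx.le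
    exact (Real.exp_le_exp.2 this).trans (le_add_of_nonneg_right (Real.exp_pos _).le)

variable {Ω : Type*} [MeasureSpace Ω] {X : Ω → ℝ}

private lemma integrable_abs_pow_mul_exp (hX : Measurable X) {ε : ℝ} (hε : 0 < ε)
    (hint : ∀ t : ℝ, |t| < ε → Integrable (fun ω => Real.exp (t * X ω)))
    {t : ℝ} (ht : |t| < ε) (n : ℕ) :
    Integrable (fun ω => |X ω| ^ n * Real.exp (t * X ω)) := by
  set δ : ℝ := (ε - |t|) / 2 with hδdef
  have hδ : 0 < δ := by
    rw [hδdef]; linarith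
  have h1 : |t + δ| < ε := by
    rw [abs_lt, hδdef]
    constructor <;> linarith [le_abs_self t, neg_le_abs t]
  have h2 : |t - δ| < ε := by
    rw [abs_lt, hδdef]
    constructor <;> linarith [le_abs_self t, neg_le_abs t]
  have hbound : Integrable (fun ω => (n.factorial : ℝ) / δ ^ n *
      (Real.exp ((t + δ) * X ω) + Real.exp ((t - δ) * X ω))) :=
    ((hint _ h1).add (hint _ h2)).const_mul _
  have hmeas : AEStronglyMeasurable (fun ω => |X ω| ^ n * Real.exp (t * X ω)) ℙ :=
    (((hX.abs.pow_const n).mul ((hX.const_mul t).exp))).aestronglyMeasurable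
  refine hbound.mono' hmeas (Filter.Eventually.of_forall fun ω => ?_)
  have hnn : (0:ℝ) ≤ |X ω| ^ n * Real.exp (t * X ω) :=
    mul_nonneg (pow_nonneg (abs_nonneg _) _) (Real.exp_pos _).le
  rw [Real.norm_eq_abs, abs_of_nonneg hnn]
  have hp : |X ω| ^ n ≤ (n.factorial : ℝ) / δ ^ n * Real.exp (δ * |X ω|) := by
    have h := Real.pow_div_factorial_le_exp (δ * |X ω|) (mul_nonneg hδ.le (abs_nonneg (X ω))) n
    rw [mul_pow, div_le_iff₀ (by positivity : (0:ℝ) < (n.factorial : ℝ))] at h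
    rw [div_mul_eq_mul_div, le_div_iff₀ (pow_pos hδ n)]
    nlinarith [pow_pos hδ n, Real.exp_pos (δ * |X ω|)]
  have hb : Real.exp (δ * |X ω|) * Real.exp (t * X ω)
      ≤ Real.exp ((t + δ) * X ω) + Real.exp ((t - δ) * X ω) := by
    rw [← Real.exp_add]
    rcases le_or_gt 0 (X ω) with hx | hx
    · rw [abs_of_nonneg hx]
      have he : δ * X ω + t * X ω = (t + δ) * X ω := by ring
      rw [he]
      exact le_add_of_nonneg_right (Real.exp_pos _).le
    · rw [abs_of_neg hx]
      have he : δ * -X ω + t * X ω = (t - δ) * X ω := by ring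
      rw [he]
      exact le_add_of_nonneg_left (Real.exp_pos _).le
  calc |X ω| ^ n * Real.exp (t * X ω)
      ≤ ((n.factorial : ℝ) / δ ^ n * Real.exp (δ * |X ω|)) * Real.exp (t * X ω) :=
        mul_le_mul_of_nonneg_right hp (Real.exp_pos _).le
    _ = (n.factorial : ℝ) / δ ^ n * (Real.exp (δ * |X ω|) * Real.exp (t * X ω)) := by ring
    _ ≤ (n.factorial : ℝ) / δ ^ n *
          (Real.exp ((t + δ) * X ω) + Real.exp ((t - δ) * X ω)) :=
        mul_le_mul_of_nonneg_left hb (by positivity)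

private lemma integrable_pow_mul_exp (hX : Measurable X) {ε : ℝ} (hε : 0 < ε)
    (hint : ∀ t : ℝ, |t| < ε → Integrable (fun ω => Real.exp (t * X ω)))
    {t : ℝ} (ht : |t| < ε) (n : ℕ) :
    Integrable (fun ω => X ω ^ n * Real.exp (t * X ω)) := by
  refine (integrable_abs_pow_mul_exp hX hε hint ht n).mono'
    (((hX.pow_const n).mul ((hX.const_mul t).exp)).aestronglyMeasurable)
    (Filter.Eventually.of_forall fun ω => ?_)
  rw [Real.norm_eq_abs, abs_mul, abs_pow, Real.abs_exp]

private lemma hasDerivAt_integral_pow_exp (hX : Measurable X) {ε : ℝ} (hε : 0 < ε)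
    (hint : ∀ t : ℝ, |t| < ε → Integrable (fun ω => Real.exp (t * X ω)))
    (n : ℕ) {t₀ : ℝ} (ht₀ : |t₀| < ε) :
    HasDerivAt (fun t => ∫ ω, X ω ^ n * Real.exp (t * X ω))
      (∫ ω, X ω ^ (n + 1) * Real.exp (t₀ * X ω)) t₀ := by
  set r : ℝ := (ε - |t₀|) / 2 with hrdef
  have hr : 0 < r := by
    rw [hrdef]; linarith [abs_nonneg t₀]
  have ha : |t₀ - r| < ε := by
    rw [abs_lt, hrdef]
    constructor <;> linarith [le_abs_self t₀, neg_le_abs t₀]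
  have hb : |t₀ + r| < ε := by
    rw [abs_lt, hrdef]
    constructor <;> linarith [le_abs_self t₀, neg_le_abs t₀]
  have key := hasDerivAt_integral_of_dominated_loc_of_deriv_le (μ := (ℙ : Measure Ω))
    (F := fun t ω => X ω ^ n * Real.exp (t * X ω))
    (F' := fun t ω => X ω ^ (n + 1) * Real.exp (t * X ω))
    (x₀ := t₀)
    (bound := fun ω => |X ω| ^ (n + 1) * Real.exp ((t₀ - r) * X ω)
      + |X ω| ^ (n + 1) * Real.exp ((t₀ + r) * X ω))
    (Metric.ball_mem_nhds t₀ hr)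
    (Filter.Eventually.of_forall fun t =>
      (((hX.pow_const n).mul ((hX.const_mul t).exp)).aestronglyMeasurable))
    (integrable_pow_mul_exp hX hε hint ht₀ n)
    (((hX.pow_const (n + 1)).mul ((hX.const_mul t₀).exp)).aestronglyMeasurable)
    (Filter.Eventually.of_forall fun ω => ?_)
    ?_
    (Filter.Eventually.of_forall fun ω => ?_)
  · exact key.2
  · -- bound
    intro t htmem
    rw [Metric.mem_ball, Real.dist_eq, abs_lt] at htmem
    rw [Real.norm_eq_abs, abs_mul, abs_pow, Real.abs_exp]
    have hle : Real.exp (t * X ω)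
        ≤ Real.exp ((t₀ - r) * X ω) + Real.exp ((t₀ + r) * X ω) :=
      exp_mul_le_add (by linarith) (by linarith)
    calc |X ω| ^ (n + 1) * Real.exp (t * X ω)
        ≤ |X ω| ^ (n + 1) * (Real.exp ((t₀ - r) * X ω) + Real.exp ((t₀ + r) * X ω)) :=
          mul_le_mul_of_nonneg_left hle (pow_nonneg (abs_nonneg _) _)
      _ = _ := by ring
  · -- bound integrable
    exact (integrable_abs_pow_mul_exp hX hε hint ha (n + 1)).add
      (integrable_abs_pow_mul_exp hX hε hint hb (n + 1))
  · -- differentiability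
    intro t _
    have h := ((hasDerivAt_mul_const (X ω)).exp).const_mul (X ω ^ n) (x := t)
    exact h.congr_deriv (by ring)

end IntegAux

/-- **Moment–cumulant recursion.** Let `X` be a real random variable whose moment
generating function is finite on a neighborhood of `0`, and let
`κ_j(X)` be the `j`-th derivative at `0` of the cumulant generating function
`K(t) = log E[e^{tX}]`. Then for every `m ∈ ℕ`,
`E[X^{m+1}] = Σ_{s=0}^m C(m,s) κ_{s+1}(X) E[X^{m−s}]`. -/
theorem moment_cumulant_recursion
    {Ω : Type*} [MeasureSpace Ω] [IsProbabilityMeasure (ℙ : Measure Ω)]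
    (X : Ω → ℝ) (hX : Measurable X)
    (hmgf : ∃ ε : ℝ, 0 < ε ∧ ∀ t : ℝ, |t| < ε →
      Integrable (fun ω => Real.exp (t * X ω))) :
    ∀ m : ℕ,
      ∫ ω, (X ω) ^ (m + 1) =
        ∑ s ∈ range (m + 1), (m.choose s : ℝ) *
          iteratedDeriv (s + 1) (fun t : ℝ => Real.log (∫ ω, Real.exp (t * X ω))) 0 *
          ∫ ω, (X ω) ^ (m - s) := by
  obtain ⟨ε, hε, hint⟩ := hmgf
  intro m
  set s : Set ℝ := Metric.ball (0 : ℝ) ε with hsdef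
  have hs : IsOpen s := Metric.isOpen_ball
  have h0 : (0 : ℝ) ∈ s := Metric.mem_ball_self hε
  have hmem : ∀ t : ℝ, t ∈ s ↔ |t| < ε := by
    intro t; rw [hsdef, Metric.mem_ball, Real.dist_eq, sub_zero]
  set F : ℕ → ℝ → ℝ := fun n t => ∫ ω, X ω ^ n * Real.exp (t * X ω) with hFdef
  have hchain : ∀ n, ∀ t ∈ s, HasDerivAt (F n) (F (n + 1) t) t := by
    intro n t ht
    exact hasDerivAt_integral_pow_exp hX hε hint n ((hmem t).1 ht)
  -- positivity of F 0 on s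
  have hF0mgf : ∀ t : ℝ, F 0 t = mgf X ℙ t := by
    intro t
    simp only [hFdef, mgf, pow_zero, one_mul]
  have hpos : ∀ t ∈ s, 0 < F 0 t := by
    intro t ht
    rw [hF0mgf t]
    exact mgf_pos (hint t ((hmem t).1 ht))
  -- cumulant generating function
  set K : ℝ → ℝ := fun t => Real.log (∫ ω, Real.exp (t * X ω)) with hKdef
  have hKF : K = fun t => Real.log (F 0 t) := by
    funext t
    simp only [hKdef, hFdef, pow_zero, one_mul]
  set L : ℝ → ℝ := fun t => F 1 t / F 0 t with hLdef
  have hK' : ∀ t ∈ s, HasDerivAt K (L t) t := by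
    intro t ht
    rw [hKF]
    exact (hchain 0 t ht).log (hpos t ht).ne'
  have hderivK : Set.EqOn (deriv K) L s := fun t ht => (hK' t ht).deriv
  -- smoothness
  have hsmooth : ∀ k, ContDiffOn ℝ ∞ (F k) s := contDiffOn_chain hs F hchain
  have hsmoothL : ContDiffOn ℝ ∞ L s := by
    exact ((hsmooth 1).div (hsmooth 0) (fun t ht => (hpos t ht).ne'))
  -- F 1 = L * F 0 on s
  have hF1LM : Set.EqOn (F 1) (fun t => L t * F 0 t) s := by
    intro t ht
    simp only [hLdef]
    rw [div_mul_cancel₀ _ (hpos t ht).ne']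
  -- iterated derivatives of K at 0
  have hKL : ∀ k : ℕ, iteratedDeriv (k + 1) K 0 = iteratedDeriv k L 0 := by
    intro k
    rw [iteratedDeriv_succ']
    exact hderivK.iteratedDeriv_of_isOpen hs k h0
  -- moments
  have hmom : ∀ n : ℕ, (∫ ω, (X ω) ^ n) = F n 0 := by
    intro n
    simp only [hFdef, zero_mul, Real.exp_zero, mul_one]
  calc (∫ ω, (X ω) ^ (m + 1))
      = F (m + 1) 0 := hmom (m + 1)
    _ = F (1 + m) 0 := by rw [add_comm]
    _ = iteratedDeriv m (F 1) 0 := (iteratedDeriv_chain hs F hchain m 1 0 h0).symm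
    _ = iteratedDeriv m (fun t => L t * F 0 t) 0 :=
        hF1LM.iteratedDeriv_of_isOpen hs m h0
    _ = ∑ k ∈ range (m + 1),
          (m.choose k : ℝ) * iteratedDeriv k L 0 * iteratedDeriv (m - k) (F 0) 0 :=
        iteratedDeriv_mul_of_isOpen hs m hsmoothL (hsmooth 0) h0
    _ = ∑ k ∈ range (m + 1), (m.choose k : ℝ) *
          iteratedDeriv (k + 1) K 0 * ∫ ω, (X ω) ^ (m - k) := by
        refine Finset.sum_congr rfl fun k _ => ?_
        rw [hKL k, iteratedDeriv_chain hs F hchain (m - k) 0 0 h0, Nat.zero_add,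
          hmom (m - k)]
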